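/- Subdividing an edge of a graph G with at least one edge (replacing edge uv with edges uw and wv through a new vertex w) does not increase the carving-width of G, provided G has maximum degree at least 2. -/

import Mathlib

/-- Rooted binary carving trees over a vertex type `V`: unrooted binary tree
embeddings (with internal nodes of degree 3) of a graph on `V` are encoded by
rooting at the midpoint of an arbitrary tree edge. -/
inductive CarvTree (V : Type) where
  | leaf : V → CarvTree V
  | node : CarvTree V → CarvTree V → CarvTree V

namespace CarvTree

/-- The list of leaves of a carving tree. -/
def leafList {V : Type} : CarvTree V → List V
  | leaf v => [v]
  | node l r => leafList l ++ leafList r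

/-- The set of leaves of a carving tree. -/
def leafSet {V : Type} [DecidableEq V] : CarvTree V → Finset V
  | leaf v => {v}
  | node l r => leafSet l ∪ leafSet r

/-- The cuts of the embedding determined by a carving tree: one side of the
vertex bipartition induced by each tree edge. -/
def cuts {V : Type} [DecidableEq V] : CarvTree V → List (Finset V)
  | leaf v => [{v}]
  | node l r => (leafSet l ∪ leafSet r) :: (cuts l ++ cuts r)

end CarvTree

/-- The weight of a cut: the number of edges of `G` between `S` and its
complement. -/
def cutWeight {V : Type} [Fintype V] [DecidableEq V] (G : SimpleGraph V)
    [DecidableRel G.Adj] (S : Finset V) : ℕ :=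
  (Finset.univ.filter fun p : V × V => p.1 ∈ S ∧ p.2 ∉ S ∧ G.Adj p.1 p.2).card

/-- A carving tree is a valid tree embedding when its leaves are exactly the
vertices of the graph, each appearing once (a bijection between vertices and
leaves). -/
def IsCarving {V : Type} [Fintype V] [DecidableEq V] (t : CarvTree V) : Prop :=
  t.leafList.Nodup ∧ t.leafSet = Finset.univ

/-- The congestion of a tree embedding: the maximal weight of a tree edge. -/
def congestion {V : Type} [Fintype V] [DecidableEq V] (G : SimpleGraph V)
    [DecidableRel G.Adj] (t : CarvTree V) : ℕ :=
  (t.cuts.map (cutWeight G)).foldr max 0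

/-- The carving-width of a graph: the minimal congestion over all its
embeddings into binary trees. -/
noncomputable def carvingWidth {V : Type} [Fintype V] [DecidableEq V]
    (G : SimpleGraph V) [DecidableRel G.Adj] : ℕ :=
  sInf {k | ∃ t : CarvTree V, IsCarving t ∧ congestion G t ≤ k}

/-- Subdivision of the edge `uv` of `G`: the edge `uv` is replaced by the two
edges `u–w` and `w–v` through a new vertex `w` (encoded as `none`). -/
def subdivide {V : Type} (G : SimpleGraph V) (u v : V) : SimpleGraph (Option V) where
  Adj x y :=
    match x, y with
    | some a, some b => G.Adj a b ∧ ¬((a = u ∧ b = v) ∨ (a = v ∧ b = u))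
    | some a, none => a = u ∨ a = v
    | none, some b => b = u ∨ b = v
    | none, none => False
  symm := by
    constructor
    rintro (_ | a) (_ | b) h
    · exact h
    · exact h
    · exact h
    · exact ⟨h.1.symm, fun hc => h.2 (by tauto)⟩
  loopless := by
    constructor
    rintro (_ | a) h
    · exact h
    · exact G.loopless.irrefl a h.1

instance {V : Type} [DecidableEq V] (G : SimpleGraph V) [DecidableRel G.Adj]
    (u v : V) : DecidableRel (subdivide G u v).Adj := by
  rintro (_ | a) (_ | b) <;> dsimp [subdivide] <;> infer_instance

section Aux

open CarvTree Finset

variable {V : Type} [DecidableEq V]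

lemma adj_subdivide_some_some {G : SimpleGraph V} {u v a b : V} :
    (subdivide G u v).Adj (some a) (some b)
      ↔ G.Adj a b ∧ ¬((a = u ∧ b = v) ∨ (a = v ∧ b = u)) := Iff.rfl

lemma adj_subdivide_some_none {G : SimpleGraph V} {u v a : V} :
    (subdivide G u v).Adj (some a) none ↔ (a = u ∨ a = v) := Iff.rfl

lemma adj_subdivide_none_some {G : SimpleGraph V} {u v b : V} :
    (subdivide G u v).Adj none (some b) ↔ (b = u ∨ b = v) := Iff.rfl

lemma adj_subdivide_none_none {G : SimpleGraph V} {u v : V} :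
    ¬ (subdivide G u v).Adj none none := id

lemma leafSet_eq_toFinset (t : CarvTree V) : t.leafSet = t.leafList.toFinset := by
  induction t with
  | leaf v => simp [leafSet, leafList]
  | node l r ihl ihr => simp [leafSet, leafList, ihl, ihr]

lemma foldr_max_le_iff (l : List ℕ) (k : ℕ) :
    l.foldr max 0 ≤ k ↔ ∀ x ∈ l, x ≤ k := by
  induction l with
  | nil => simp
  | cons a l ih => simp [Nat.max_le, ih]

lemma le_foldr_max {l : List ℕ} {x : ℕ} (h : x ∈ l) : x ≤ l.foldr max 0 := by
  induction l with
  | nil => simp at h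
  | cons a l ih =>
    rcases List.mem_cons.1 h with rfl | h
    · exact le_max_left _ _
    · exact (ih h).trans (le_max_right _ _)

lemma congestion_le_iff {V : Type} [Fintype V] [DecidableEq V] (G : SimpleGraph V)
    [DecidableRel G.Adj] (t : CarvTree V) (k : ℕ) :
    congestion G t ≤ k ↔ ∀ S ∈ t.cuts, cutWeight G S ≤ k := by
  unfold congestion
  rw [foldr_max_le_iff]
  simp

lemma cutWeight_le_congestion {V : Type} [Fintype V] [DecidableEq V] {G : SimpleGraph V}
    [DecidableRel G.Adj] {t : CarvTree V} {S : Finset V} (h : S ∈ t.cuts) :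
    cutWeight G S ≤ congestion G t :=
  le_foldr_max (List.mem_map_of_mem h)

lemma singleton_mem_cuts {t : CarvTree V} {w : V} (h : w ∈ t.leafSet) :
    ({w} : Finset V) ∈ t.cuts := by
  induction t with
  | leaf v =>
    simp only [leafSet, Finset.mem_singleton] at h
    simp [cuts, h]
  | node l r ihl ihr =>
    simp only [leafSet, Finset.mem_union] at h
    rcases h with h | h
    · exact List.mem_cons_of_mem _ (List.mem_append_left _ (ihl h))
    · exact List.mem_cons_of_mem _ (List.mem_append_right _ (ihr h))

lemma cutWeight_singleton {W : Type} [Fintype W] [DecidableEq W] (G : SimpleGraph W)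
    [DecidableRel G.Adj] (w : W) : cutWeight G {w} = G.degree w := by
  unfold cutWeight
  rw [show (Finset.univ.filter fun p : W × W =>
      p.1 ∈ ({w} : Finset W) ∧ p.2 ∉ ({w} : Finset W) ∧ G.Adj p.1 p.2)
      = {w} ×ˢ G.neighborFinset w from ?_]
  · rw [Finset.card_product, Finset.card_singleton, one_mul, SimpleGraph.degree]
  · ext ⟨a, b⟩
    simp only [Finset.mem_filter, Finset.mem_univ, true_and, Finset.mem_singleton,
      Finset.mem_product, SimpleGraph.mem_neighborFinset]
    constructor
    · rintro ⟨rfl, _, hadj⟩; exact ⟨rfl, hadj⟩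
    · rintro ⟨rfl, hadj⟩; exact ⟨rfl, hadj.ne', hadj⟩

/-- The carving tree for the subdivided graph: replace the leaf `u` by a cherry
`{u, none}`. -/
def subTree (u : V) : CarvTree V → CarvTree (Option V)
  | .leaf w => if w = u then .node (.leaf (some u)) (.leaf none) else .leaf (some w)
  | .node l r => .node (subTree u l) (subTree u r)

/-- The corresponding transformation of cuts. -/
def liftCut (u : V) (S : Finset V) : Finset (Option V) :=
  if u ∈ S then insert none (S.image some) else S.image some

lemma mem_liftCut_some {u a : V} {S : Finset V} : some a ∈ liftCut u S ↔ a ∈ S := by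
  unfold liftCut; split <;> simp

lemma mem_liftCut_none {u : V} {S : Finset V} : (none : Option V) ∈ liftCut u S ↔ u ∈ S := by
  unfold liftCut
  split <;> simp_all

lemma liftCut_union (u : V) (A B : Finset V) :
    liftCut u (A ∪ B) = liftCut u A ∪ liftCut u B := by
  ext x
  cases x <;> simp [mem_liftCut_some, mem_liftCut_none]

lemma leafSet_subTree (u : V) (t : CarvTree V) :
    (subTree u t).leafSet = liftCut u t.leafSet := by
  induction t with
  | leaf w =>
    by_cases h : w = u
    · subst h
      ext x
      cases x <;> simp [subTree, leafSet, liftCut]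
    · ext x
      cases x <;> simp [subTree, leafSet, liftCut, h, Ne.symm h]
  | node l r ihl ihr =>
    simp [subTree, leafSet, ihl, ihr, liftCut_union]

lemma leafList_subTree (u : V) (t : CarvTree V) :
    (subTree u t).leafList
      = t.leafList.flatMap (fun w => if w = u then [some u, none] else [some w]) := by
  induction t with
  | leaf w =>
    by_cases h : w = u <;> simp [subTree, leafList, h]
  | node l r ihl ihr =>
    simp [subTree, leafList, ihl, ihr]

lemma nodup_subTree (u : V) {t : CarvTree V} (h : t.leafList.Nodup) :
    (subTree u t).leafList.Nodup := by
  rw [leafList_subTree, List.nodup_flatMap]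
  constructor
  · intro x _
    split <;> simp
  · have key : ∀ (w : V) (x : Option V),
        (x ∈ if w = u then [some u, none] else [some w])
          ↔ (x = some w ∨ (w = u ∧ x = none)) := by
      intro w x
      split <;> simp_all
    refine h.imp ?_
    intro a b hab x hx hx'
    simp only [key] at hx hx'
    rcases hx with rfl | ⟨rfl, rfl⟩ <;> rcases hx' with h' | ⟨rfl, h'⟩ <;> simp_all

lemma cuts_subTree (u : V) (t : CarvTree V) :
    ∀ T ∈ (subTree u t).cuts,
      (∃ S ∈ t.cuts, T = liftCut u S) ∨ T = {some u} ∨ T = ({none} : Finset (Option V)) := by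
  induction t with
  | leaf w =>
    intro T hT
    by_cases h : w = u
    · subst h
      simp only [subTree, if_pos rfl, if_true, cuts, leafSet, List.mem_cons, List.mem_append,
        List.mem_singleton, List.mem_nil_iff, or_false] at hT
      rcases hT with rfl | rfl | rfl
      · left
        refine ⟨({w} : Finset V), by simp [cuts], ?_⟩
        ext x
        cases x <;> simp [liftCut]
      · right; left; rfl
      · right; right; rfl
    · simp only [subTree, if_neg h, cuts, List.mem_singleton] at hT
      subst hT
      left
      refine ⟨({w} : Finset V), by simp [cuts], ?_⟩
      ext x
      cases x <;> simp [liftCut, Ne.symm h, h]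
  | node l r ihl ihr =>
    intro T hT
    simp only [subTree, cuts, List.mem_cons, List.mem_append] at hT
    rcases hT with rfl | hT | hT
    · left
      refine ⟨l.leafSet ∪ r.leafSet, by simp [cuts], ?_⟩
      rw [leafSet_subTree, leafSet_subTree, liftCut_union]
    · rcases ihl T hT with ⟨S, hS, rfl⟩ | h | h
      · exact Or.inl ⟨S, by simp [cuts, hS], rfl⟩
      · exact Or.inr (Or.inl h)
      · exact Or.inr (Or.inr h)
    · rcases ihr T hT with ⟨S, hS, rfl⟩ | h | h
      · exact Or.inl ⟨S, by simp [cuts, hS], rfl⟩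
      · exact Or.inr (Or.inl h)
      · exact Or.inr (Or.inr h)

lemma degree_subdivide_some {V : Type} [Fintype V] [DecidableEq V] {G : SimpleGraph V}
    [DecidableRel G.Adj] {u v : V} (huv : G.Adj u v) :
    (subdivide G u v).degree (some u) = G.degree u := by
  have hne : u ≠ v := huv.ne
  unfold SimpleGraph.degree
  apply Finset.card_bij (fun a _ => a.getD v)
  · rintro (_ | b) hb
    · simpa using huv
    · rw [SimpleGraph.mem_neighborFinset, adj_subdivide_some_some] at hb
      simpa using hb.1
  · rintro (_ | b) hb (_ | c) hc heq
    · rfl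
    · exfalso
      rw [SimpleGraph.mem_neighborFinset, adj_subdivide_some_some] at hc
      rw [Option.getD_none, Option.getD_some] at heq
      exact hc.2 (Or.inl ⟨rfl, heq.symm⟩)
    · exfalso
      rw [SimpleGraph.mem_neighborFinset, adj_subdivide_some_some] at hb
      rw [Option.getD_none, Option.getD_some] at heq
      exact hb.2 (Or.inl ⟨rfl, heq⟩)
    · rw [Option.getD_some, Option.getD_some] at heq
      rw [heq]
  · intro b hb
    rw [SimpleGraph.mem_neighborFinset] at hb
    by_cases hbv : b = v
    · subst hbv
      refine ⟨none, ?_, rfl⟩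
      rw [SimpleGraph.mem_neighborFinset, adj_subdivide_some_none]
      left; rfl
    · refine ⟨some b, ?_, rfl⟩
      rw [SimpleGraph.mem_neighborFinset, adj_subdivide_some_some]
      exact ⟨hb, by tauto⟩

lemma degree_subdivide_none {V : Type} [Fintype V] [DecidableEq V] {G : SimpleGraph V}
    [DecidableRel G.Adj] {u v : V} (hne : u ≠ v) :
    (subdivide G u v).degree none = 2 := by
  unfold SimpleGraph.degree
  rw [show (subdivide G u v).neighborFinset none = {some u, some v} from ?_]
  · rw [Finset.card_insert_of_notMem (by simp [hne]), Finset.card_singleton]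
  · ext x
    cases x
    · rw [SimpleGraph.mem_neighborFinset]
      exact iff_of_false adj_subdivide_none_none (by simp)
    · rw [SimpleGraph.mem_neighborFinset]
      simp [adj_subdivide_none_some]

lemma cutWeight_liftCut {V : Type} [Fintype V] [DecidableEq V] (G : SimpleGraph V)
    [DecidableRel G.Adj] {u v : V} (huv : G.Adj u v) (S : Finset V) :
    cutWeight (subdivide G u v) (liftCut u S) = cutWeight G S := by
  have hne : u ≠ v := huv.ne
  unfold cutWeight
  symm
  apply Finset.card_bij (fun p _ => if p = (u, v) then ((none : Option V), some v)
    else if p = (v, u) then (some v, none) else (some p.1, some p.2))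
  · rintro ⟨a, b⟩ hp
    simp only [Finset.mem_filter, Finset.mem_univ, true_and] at hp ⊢
    obtain ⟨ha, hb, hadj⟩ := hp
    split_ifs with h1 h2
    · rw [Prod.mk.injEq] at h1; obtain ⟨rfl, rfl⟩ := h1
      exact ⟨mem_liftCut_none.2 ha, fun hc => hb (mem_liftCut_some.1 hc),
        adj_subdivide_none_some.2 (Or.inr rfl)⟩
    · rw [Prod.mk.injEq] at h2; obtain ⟨rfl, rfl⟩ := h2
      exact ⟨mem_liftCut_some.2 ha, fun hc => hb (mem_liftCut_none.1 hc),
        adj_subdivide_some_none.2 (Or.inr rfl)⟩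
    · rw [Prod.mk.injEq] at h1 h2
      exact ⟨mem_liftCut_some.2 ha, fun hc => hb (mem_liftCut_some.1 hc),
        adj_subdivide_some_some.2 ⟨hadj, by tauto⟩⟩
  · rintro ⟨a, b⟩ - ⟨c, d⟩ - heq
    split_ifs at heq <;> simp_all
  · rintro ⟨x, y⟩ hq
    simp only [Finset.mem_filter, Finset.mem_univ, true_and] at hq
    obtain ⟨hx, hy, hadj⟩ := hq
    rcases x with _ | a
    · rcases y with _ | b
      · exact absurd hadj adj_subdivide_none_none
      · have hu : u ∈ S := mem_liftCut_none.1 hx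
        have hbS : b ∉ S := fun hc => hy (mem_liftCut_some.2 hc)
        have hbv : b = v := by
          rcases adj_subdivide_none_some.1 hadj with rfl | rfl
          · exact absurd hu hbS
          · rfl
        refine ⟨(u, v), ?_, ?_⟩
        · simp only [Finset.mem_filter, Finset.mem_univ, true_and]
          exact ⟨hu, hbv ▸ hbS, huv⟩
        · rw [if_pos rfl, hbv]
    · rcases y with _ | b
      · have hu : u ∉ S := fun hc => hy (mem_liftCut_none.2 hc)
        have haS : a ∈ S := mem_liftCut_some.1 hx
        have hav : a = v := by
          rcases adj_subdivide_some_none.1 hadj with rfl | rfl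
          · exact absurd haS hu
          · rfl
        refine ⟨(v, u), ?_, ?_⟩
        · simp only [Finset.mem_filter, Finset.mem_univ, true_and]
          exact ⟨hav ▸ haS, hu, huv.symm⟩
        · rw [if_neg (fun h => hne (congrArg Prod.fst h).symm), if_pos rfl, hav]
      · have haS : a ∈ S := mem_liftCut_some.1 hx
        have hbS : b ∉ S := fun hc => hy (mem_liftCut_some.2 hc)
        obtain ⟨hadj', hno⟩ := adj_subdivide_some_some.1 hadj
        refine ⟨(a, b), ?_, ?_⟩
        · simp only [Finset.mem_filter, Finset.mem_univ, true_and]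
          exact ⟨haS, hbS, hadj'⟩
        · rw [if_neg, if_neg]
          · rintro h; rw [Prod.mk.injEq] at h; exact hno (Or.inr ⟨h.1, h.2⟩)
          · rintro h; rw [Prod.mk.injEq] at h; exact hno (Or.inl ⟨h.1, h.2⟩)

/-- A fallback carving tree: a caterpillar over a list of vertices. -/
def mkTree (v : V) (l : List V) : CarvTree V :=
  l.foldl (fun t w => .node t (.leaf w)) (.leaf v)

lemma leafList_foldl (t : CarvTree V) (l : List V) :
    (l.foldl (fun t w => CarvTree.node t (.leaf w)) t).leafList = t.leafList ++ l := by
  induction l generalizing t with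
  | nil => simp
  | cons a l ih => simp [List.foldl_cons, ih, leafList]

lemma leafList_mkTree (v : V) (l : List V) : (mkTree v l).leafList = v :: l := by
  unfold mkTree
  rw [leafList_foldl]
  rfl

end Aux

/-- Subdividing an edge of a graph `G` with at least one edge does not increase
the carving-width of `G`, provided `G` has maximum degree at least `2`. -/
theorem carvingWidth_subdivide_le {V : Type} [Fintype V] [DecidableEq V]
    (G : SimpleGraph V) [DecidableRel G.Adj] (u v : V) (huv : G.Adj u v)
    (hdeg : 2 ≤ G.maxDegree) :
    carvingWidth (subdivide G u v) ≤ carvingWidth G := by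
  classical
  haveI : Nonempty V := ⟨u⟩
  have hne : ({k | ∃ t : CarvTree V, IsCarving t ∧ congestion G t ≤ k}).Nonempty := by
    obtain ⟨w, l, hwl⟩ : ∃ w l, (Finset.univ : Finset V).toList = w :: l := by
      have hu : u ∈ (Finset.univ : Finset V).toList := by simp [Finset.mem_toList]
      cases hL : (Finset.univ : Finset V).toList with
      | nil => rw [hL] at hu; simp at hu
      | cons w l => exact ⟨w, l, rfl⟩
    refine ⟨congestion G (mkTree w l), mkTree w l, ⟨?_, ?_⟩, le_rfl⟩
    · rw [leafList_mkTree, ← hwl]; exact Finset.nodup_toList _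
    · rw [leafSet_eq_toFinset, leafList_mkTree, ← hwl, Finset.toList_toFinset]
  obtain ⟨t, ht, hcon⟩ := Nat.sInf_mem hne
  have hb : congestion (subdivide G u v) (subTree u t) ≤ congestion G t := by
    rw [congestion_le_iff]
    intro T hT
    rcases cuts_subTree u t T hT with ⟨S, hS, rfl⟩ | rfl | rfl
    · rw [cutWeight_liftCut G huv]
      exact cutWeight_le_congestion hS
    · rw [cutWeight_singleton, degree_subdivide_some huv, ← cutWeight_singleton]
      exact cutWeight_le_congestion
        (singleton_mem_cuts (by rw [ht.2]; exact Finset.mem_univ u))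
    · rw [cutWeight_singleton, degree_subdivide_none huv.ne]
      obtain ⟨w, hw⟩ := G.exists_maximal_degree_vertex
      calc 2 ≤ G.maxDegree := hdeg
        _ = G.degree w := hw
        _ = cutWeight G {w} := (cutWeight_singleton G w).symm
        _ ≤ congestion G t := cutWeight_le_congestion
            (singleton_mem_cuts (by rw [ht.2]; exact Finset.mem_univ w))
  have hle : carvingWidth (subdivide G u v) ≤ congestion (subdivide G u v) (subTree u t) :=
    Nat.sInf_le ⟨subTree u t,
      ⟨nodup_subTree u ht.1, by rw [leafSet_subTree, ht.2]; ext x; cases x <;>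
        simp [liftCut]⟩, le_rfl⟩
  exact hle.trans (hb.trans hcon)
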